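/- Let h be an injective function defined on a finite set D ⊆ 2^ω with values in 2^ω, let n ≤ t be natural numbers, and let π be a permutation of 2^n such that h(x)↾n = π(x↾n) for every x ∈ D. Let ξ_0, …, ξ_{k-1} ∈ 2^t be distinct and ζ_0, …, ζ_{k-1} ∈ 2^t be distinct, and assume: π(ξ_i↾n) = ζ_i↾n for every i < k; no x ∈ D satisfies x↾t = ξ_i, and no x ∈ D satisfies h(x)↾t = ζ_i, for any i < k; distinct elements of D have distinct restrictions to t, and distinct elements of h[D] have distinct restrictions to t. Then there exists a permutation π' of 2^t such that π'(η)↾n = π(η↾n) for every η ∈ 2^t, π'(x↾t) = h(x)↾t for every x ∈ D, and π'(ξ_i) = ζ_i for every i < k. -/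
import Mathlib

/-- Restriction of `x ∈ 2^ω` to its first `n` coordinates. -/
def res (n : ℕ) (x : ℕ → Bool) : Fin n → Bool := fun i => x i

/-- Restriction of `η ∈ 2^t` to its first `n` coordinates (`n ≤ t`). -/
def resLE {n t : ℕ} (h : n ≤ t) (η : Fin t → Bool) : Fin n → Bool :=
  fun i => η (Fin.castLE h i)

example {n t : ℕ} (hnt : n ≤ t) (x : ℕ → Bool) : resLE hnt (res t x) = res n x := rfl

/-- Extend an injection on a set to a full equiv, given equal cardinalities. -/
lemma extend_injOn {γ δ : Type*} [Fintype γ] [Fintype δ] [DecidableEq γ] [DecidableEq δ]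
    (hcard : Fintype.card γ = Fintype.card δ)
    (s : Set γ) (f : γ → δ) (hinj : Set.InjOn f s) :
    ∃ e : γ ≃ δ, ∀ a ∈ s, e a = f a := by
  classical
  have hbij : Set.BijOn f s (f '' s) := ⟨Set.mapsTo_image f s, hinj, Set.surjOn_image f s⟩
  let e₀ : s ≃ (f '' s : Set δ) := hbij.equiv f
  have hc : Fintype.card (↥(sᶜ) : Sort _) = Fintype.card (↥((f '' s)ᶜ) : Sort _) := by
    rw [Fintype.card_compl_set, Fintype.card_compl_set, hcard, Fintype.card_congr e₀]
  obtain ⟨e₁⟩ := Fintype.card_eq.mp hc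
  obtain ⟨e, he⟩ := (Equiv.Set.compl e₀).symm e₁
  exact ⟨e, fun a ha => by have := he ⟨a, ha⟩; simpa [e₀, Set.BijOn.equiv] using this⟩

/-- Any two fibers of `resLE` are equivalent. -/
def fiberEquiv {n t : ℕ} (hnt : n ≤ t) (a a' : Fin n → Bool) :
    {η : Fin t → Bool // resLE hnt η = a} ≃ {η : Fin t → Bool // resLE hnt η = a'} where
  toFun := fun ⟨η, hη⟩ => ⟨fun i => if h : (i : ℕ) < n then a' ⟨i, h⟩ else η i, by
    funext i; simp [resLE]⟩
  invFun := fun ⟨η, hη⟩ => ⟨fun i => if h : (i : ℕ) < n then a ⟨i, h⟩ else η i, by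
    funext i; simp [resLE]⟩
  left_inv := fun ⟨η, hη⟩ => by
    subst hη
    ext i
    by_cases h : (i : ℕ) < n
    · simp only [h, dif_pos, resLE]
      congr 1
    · simp [h]
  right_inv := fun ⟨η, hη⟩ => by
    subst hη
    ext i
    by_cases h : (i : ℕ) < n
    · simp only [h, dif_pos, resLE]
      congr 1
    · simp [h]

theorem stmt_11 (D : Set (ℕ → Bool)) (hDfin : D.Finite)
    (h : (ℕ → Bool) → (ℕ → Bool)) (hinj : Set.InjOn h D)
    (n t : ℕ) (hnt : n ≤ t) (π : Equiv.Perm (Fin n → Bool))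
    (hcomp : ∀ x ∈ D, res n (h x) = π (res n x))
    (k : ℕ) (ξ ζ : Fin k → (Fin t → Bool))
    (hξ : Function.Injective ξ) (hζ : Function.Injective ζ)
    (hπξζ : ∀ i : Fin k, π (resLE hnt (ξ i)) = resLE hnt (ζ i))
    (hDξ : ∀ x ∈ D, ∀ i : Fin k, res t x ≠ ξ i)
    (hDζ : ∀ x ∈ D, ∀ i : Fin k, res t (h x) ≠ ζ i)
    (hDt : Set.InjOn (res t) D)
    (hhDt : Set.InjOn (res t) (h '' D)) :
    ∃ π' : Equiv.Perm (Fin t → Bool),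
      (∀ η : Fin t → Bool, resLE hnt (π' η) = π (resLE hnt η)) ∧
      (∀ x ∈ D, π' (res t x) = res t (h x)) ∧
      (∀ i : Fin k, π' (ξ i) = ζ i) := by
  classical
  set p : (Fin t → Bool) → (Fin n → Bool) := resLE hnt with hp
  set s : Set (Fin t → Bool) := (res t '' D) ∪ Set.range ξ with hs
  -- the partial map
  let f : (Fin t → Bool) → (Fin t → Bool) := fun σ =>
    if hD : ∃ x, x ∈ D ∧ res t x = σ then res t (h hD.choose)
    else if hξ' : ∃ i, ξ i = σ then ζ hξ'.choose else σ
  have hfD : ∀ x ∈ D, f (res t x) = res t (h x) := by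
    intro x hx
    have hD : ∃ y, y ∈ D ∧ res t y = res t x := ⟨x, hx, rfl⟩
    have := hD.choose_spec
    simp only [f, dif_pos hD]
    rw [hDt this.1 hx this.2]
  have hfξ : ∀ i, f (ξ i) = ζ i := by
    intro i
    have hD : ¬ ∃ y, y ∈ D ∧ res t y = ξ i := by
      rintro ⟨y, hy, hyi⟩; exact hDξ y hy i hyi
    have hξ' : ∃ j, ξ j = ξ i := ⟨i, rfl⟩
    simp only [f, dif_neg hD, dif_pos hξ']
    rw [hξ hξ'.choose_spec]
  have hfinj : Set.InjOn f s := by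
    rintro σ₁ (⟨x, hx, rfl⟩ | ⟨i, rfl⟩) σ₂ (⟨y, hy, rfl⟩ | ⟨j, rfl⟩) heq
    · rw [hfD x hx, hfD y hy] at heq
      exact congrArg (res t) (hinj hx hy (hhDt ⟨x, hx, rfl⟩ ⟨y, hy, rfl⟩ heq))
    · rw [hfD x hx, hfξ j] at heq
      exact absurd heq (hDζ x hx j)
    · rw [hfξ i, hfD y hy] at heq
      exact absurd heq.symm (hDζ y hy i)
    · rw [hfξ i, hfξ j] at heq
      rw [hζ heq]
  have hffib : ∀ σ ∈ s, p (f σ) = π (p σ) := by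
    rintro σ (⟨x, hx, rfl⟩ | ⟨i, rfl⟩)
    · rw [hfD x hx]
      show res n (h x) = π (res n x)
      exact hcomp x hx
    · rw [hfξ i]
      exact (hπξζ i).symm
  -- per-fiber equivs
  have hfibcard : ∀ a a' : Fin n → Bool,
      Fintype.card {η // p η = a} = Fintype.card {η // p η = a'} :=
    fun a a' => Fintype.card_congr (fiberEquiv hnt a a')
  have key : ∀ b : Fin n → Bool, ∃ e : {η // p η = b} ≃ {η // p η = π b},
      ∀ (σ : {η // p η = b}), σ.val ∈ s → (e σ).val = f σ.val := by
    intro b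
    have hne : Nonempty {η // p η = π b} :=
      ⟨(fiberEquiv hnt b (π b)) ⟨fun i => if h' : (i : ℕ) < n then b ⟨i, h'⟩ else false, by
        funext i; simp [p, resLE]⟩⟩
    let fb : {η // p η = b} → {η // p η = π b} := fun σ =>
      if hσ : σ.val ∈ s then ⟨f σ.val, by rw [hffib σ.val hσ, σ.prop]⟩
      else Classical.arbitrary _
    have hfbinj : Set.InjOn fb {σ | σ.val ∈ s} := by
      rintro σ₁ h₁ σ₂ h₂ heq
      have h₁' : (σ₁ : Fin t → Bool) ∈ s := h₁
      have h₂' : (σ₂ : Fin t → Bool) ∈ s := h₂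
      simp only [fb] at heq
      rw [dif_pos h₁', dif_pos h₂'] at heq
      exact Subtype.ext (hfinj h₁ h₂ (congrArg Subtype.val heq))
    obtain ⟨e, he⟩ := extend_injOn (hfibcard b (π b)) _ fb hfbinj
    refine ⟨e, fun σ hσ => ?_⟩
    rw [he σ hσ]
    simp [fb, dif_pos hσ]
  choose e he using key
  -- glue
  let π' : Equiv.Perm (Fin t → Bool) :=
    ((Equiv.sigmaFiberEquiv p).symm.trans
      ((Equiv.sigmaCongrRight e).trans
        ((Equiv.sigmaCongrLeft (β := fun b => {η // p η = b}) π).trans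
          (Equiv.sigmaFiberEquiv p))))
  have hπ'eval : ∀ η, π' η = (e (p η) ⟨η, rfl⟩).val := fun η => rfl
  refine ⟨π', fun η => ?_, fun x hx => ?_, fun i => ?_⟩
  · rw [hπ'eval η]
    exact (e (p η) ⟨η, rfl⟩).prop
  · rw [hπ'eval, he (p (res t x)) ⟨res t x, rfl⟩ (Or.inl ⟨x, hx, rfl⟩)]
    exact hfD x hx
  · rw [hπ'eval, he (p (ξ i)) ⟨ξ i, rfl⟩ (Or.inr ⟨i, rfl⟩)]
    exact hfξ i
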